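/- Let γ > 1 and let w = (ρ, m, E) ∈ ℝ³ be an admissible 1D Euler state, i.e. ρ > 0 and p = (γ−1)(E − m²/(2ρ)) > 0 (with γ ∈ (1, 3]). Let u = m/ρ, let c = √(γp/ρ) be the speed of sound, let f(w) = (m, ρu² + p, (E + p)u) be the 1D Euler flux, and let α ≥ |u| + c. Then both intermediate states w + f(w)/α and w − f(w)/α are admissible: each has positive density and positive pressure. This is the pointwise lemma from which the first-order Lax–Friedrichs scheme is positivity-preserving under the CFL condition (Δt/Δx)·‖|u| + c‖_∞ ≤ 1. -/

import Mathlib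

/-- Pressure of a 1D Euler state `w = (ρ, m, E)`. -/
noncomputable def eulerPressure1D (γ : ℝ) (w : Fin 3 → ℝ) : ℝ :=
  (γ - 1) * (w 2 - (w 1) ^ 2 / (2 * w 0))

/-- The 1D Euler flux `f(w) = (m, ρu² + p, (E + p)u)` with `u = m/ρ`. -/
noncomputable def eulerFlux1D (γ : ℝ) (w : Fin 3 → ℝ) : Fin 3 → ℝ :=
  ![w 1, w 0 * (w 1 / w 0) ^ 2 + eulerPressure1D γ w,
    (w 2 + eulerPressure1D γ w) * (w 1 / w 0)]

lemma euler_aux (γ ρ p u α : ℝ) (hγ : 1 < γ) (hp : 0 < p)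
    (hα : 0 < α) (hg : γ * p ≤ ρ * (α + u) ^ 2) :
    (u * ρ + α⁻¹ * (ρ * u ^ 2 + p)) ^ 2 <
      2 * (ρ + α⁻¹ * (u * ρ)) *
        ((p / (γ - 1) + ρ * u ^ 2 / 2) +
          α⁻¹ * (((p / (γ - 1) + ρ * u ^ 2 / 2) + p) * u)) := by
  have h1 : (γ : ℝ) - 1 > 0 := by linarith
  have hαne : α ≠ 0 := ne_of_gt hα
  have hgne : γ - 1 ≠ 0 := ne_of_gt h1
  have key : (γ - 1) * p ^ 2 < 2 * ρ * p * (α + u) ^ 2 := by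
    nlinarith [mul_le_mul_of_nonneg_left hg hp.le]
  have hid : 2 * (ρ + α⁻¹ * (u * ρ)) *
        ((p / (γ - 1) + ρ * u ^ 2 / 2) +
          α⁻¹ * (((p / (γ - 1) + ρ * u ^ 2 / 2) + p) * u))
      - (u * ρ + α⁻¹ * (ρ * u ^ 2 + p)) ^ 2
      = (2 * ρ * p * (α + u) ^ 2 - (γ - 1) * p ^ 2) / ((γ - 1) * α ^ 2) := by
    field_simp
    ring
  have h2 : 0 < (2 * ρ * p * (α + u) ^ 2 - (γ - 1) * p ^ 2) / ((γ - 1) * α ^ 2) :=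
    div_pos (by linarith) (by positivity)
  linarith [hid ▸ h2]

/-- Pointwise lemma behind positivity preservation of the first-order
Lax–Friedrichs scheme under the CFL condition: for `γ ∈ (1,3]`, an admissible
state `w`, and `α ≥ |u| + c`, both intermediate states `w ± f(w)/α` have
positive density and positive pressure. -/
theorem laxFriedrichs_intermediate_states_admissible
    (γ : ℝ) (hγ : 1 < γ) (hγ3 : γ ≤ 3)
    (w : Fin 3 → ℝ) (hρ : 0 < w 0) (hp : 0 < eulerPressure1D γ w)
    (u : ℝ) (hu : u = w 1 / w 0)
    (c : ℝ) (hc : c = Real.sqrt (γ * eulerPressure1D γ w / w 0))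
    (α : ℝ) (hα : |u| + c ≤ α) :
    (0 < (w + α⁻¹ • eulerFlux1D γ w) 0 ∧
        0 < eulerPressure1D γ (w + α⁻¹ • eulerFlux1D γ w)) ∧
      (0 < (w - α⁻¹ • eulerFlux1D γ w) 0 ∧
        0 < eulerPressure1D γ (w - α⁻¹ • eulerFlux1D γ w)) := by
  set p := eulerPressure1D γ w with hpdef
  have h1 : (0:ℝ) < γ - 1 := by linarith
  have hρne : w 0 ≠ 0 := ne_of_gt hρ
  have hm : w 1 = u * w 0 := by rw [hu]; field_simp
  have hE : w 2 = p / (γ - 1) + w 0 * u ^ 2 / 2 := by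
    rw [hpdef, eulerPressure1D, hm]
    field_simp
    ring
  have hcpos : 0 < c := by
    rw [hc]; exact Real.sqrt_pos.mpr (div_pos (mul_pos (by linarith) hp) hρ)
  have hc2 : c ^ 2 = γ * p / w 0 := by
    rw [hc]; exact Real.sq_sqrt (le_of_lt (div_pos (mul_pos (by linarith) hp) hρ))
  have hαpos : 0 < α := lt_of_lt_of_le (by positivity) hα
  have hαne : α ≠ 0 := ne_of_gt hαpos
  have hvp : c ≤ α + u := by
    have := abs_le.mp (le_refl |u|)
    nlinarith [neg_abs_le u, le_abs_self u]
  have hvm : c ≤ α - u := by nlinarith [le_abs_self u]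
  have hgp : γ * p ≤ w 0 * (α + u) ^ 2 := by
    have h2 : c ^ 2 ≤ (α + u) ^ 2 := by nlinarith
    have h3 : γ * p = c ^ 2 * w 0 := by rw [hc2]; field_simp
    nlinarith
  have hgm : γ * p ≤ w 0 * (α - u) ^ 2 := by
    have h2 : c ^ 2 ≤ (α - u) ^ 2 := by nlinarith
    have h3 : γ * p = c ^ 2 * w 0 := by rw [hc2]; field_simp
    nlinarith
  have hflux0 : eulerFlux1D γ w 0 = u * w 0 := by simp [eulerFlux1D, hm]
  have hflux1 : eulerFlux1D γ w 1 = w 0 * u ^ 2 + p := by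
    simp [eulerFlux1D, ← hu, ← hpdef]
  have hflux2 : eulerFlux1D γ w 2 = (w 2 + p) * u := by
    simp [eulerFlux1D, ← hu, ← hpdef]
  have hρp : (0:ℝ) < w 0 + α⁻¹ * (u * w 0) := by
    have : w 0 + α⁻¹ * (u * w 0) = α⁻¹ * (w 0 * (α + u)) := by field_simp
    rw [this]
    exact mul_pos (inv_pos.mpr hαpos) (mul_pos hρ (by linarith))
  have hρm : (0:ℝ) < w 0 - α⁻¹ * (u * w 0) := by
    have : w 0 - α⁻¹ * (u * w 0) = α⁻¹ * (w 0 * (α - u)) := by field_simp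
    rw [this]
    exact mul_pos (inv_pos.mpr hαpos) (mul_pos hρ (by linarith))
  refine ⟨⟨?_, ?_⟩, ?_, ?_⟩
  · simpa [hflux0] using hρp
  · have H := euler_aux γ (w 0) p u α hγ hp hαpos hgp
    simp only [eulerPressure1D, Pi.add_apply, Pi.smul_apply, smul_eq_mul,
      hflux0, hflux1, hflux2]
    apply mul_pos h1
    rw [sub_pos, div_lt_iff₀ (by simpa [hflux0] using (by linarith : (0:ℝ) < 2 * (w 0 + α⁻¹ * (u * w 0))))]
    rw [hm, hE]
    linarith [H]
  · simpa [hflux0] using hρm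
  · have H := euler_aux γ (w 0) p (-u) α hγ hp hαpos (by rw [show α + -u = α - u by ring]; exact hgm)
    simp only [eulerPressure1D, Pi.sub_apply, Pi.smul_apply, smul_eq_mul,
      hflux0, hflux1, hflux2]
    apply mul_pos h1
    rw [sub_pos, div_lt_iff₀ (by simpa [hflux0] using (by linarith : (0:ℝ) < 2 * (w 0 - α⁻¹ * (u * w 0))))]
    rw [hm, hE]
    linarith [H]
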